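/- arXiv:1311.4683 — 6 statements merged into one kernel-verified Lean document; each statement's English description precedes it below -/
import Mathlib

section
/- Let K be a field with char K ≠ 2, let K(x) be the rational function field, let a ∈ K be nonzero, and set t = x + a²/x. Then the integral closure of K[t] in K(x) is the Laurent polynomial ring K[x, x⁻¹]. -/
open Multiplicative

/-- The value group `ℤᵐ⁰ = WithZero (Multiplicative ℤ)` of a normalized discrete valuation. -/
abbrev Zm0 : Type := WithZero (Multiplicative ℤ)

/-- A place of an algebraic function field `F/K`, given by its associated normalized
(i.e. surjective) discrete valuation `v : F → ℤᵐ⁰`, which is trivial on the constants `K`.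
An element `f` has a zero of order `n` at the place iff `v f = ofAdd (-n)`, and a pole
iff `1 < v f`. -/
def IsFnPlace (K : Type*) {F : Type*} [Field K] [Field F] [Algebra K F]
    (v : Valuation F Zm0) : Prop :=
  Function.Surjective v ∧ ∀ c : K, c ≠ 0 → v (algebraMap K F c) = 1

/-- The place `w` of `F'` lies over the place `v` of `F` (along the embedding `f : F →+* F'`)
with ramification index `e`. -/
def PlaceLiesOver {F F' : Type*} [Field F] [Field F'] (f : F →+* F')
    (v : Valuation F Zm0) (w : Valuation F' Zm0) (e : ℕ) : Prop :=
  ∀ y : F, w (f y) = (v y) ^ e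

/-- The place `v` of `F` is unramified in the extension `F'` (given by `f : F →+* F'`):
every place of `F'` lying above it has ramification index `1`. -/
def UnramifiedIn (K : Type*) {F F' : Type*} [Field K] [Field F] [Field F']
    [Algebra K F'] (f : F →+* F') (v : Valuation F Zm0) : Prop :=
  ∀ (w : Valuation F' Zm0) (e : ℕ), IsFnPlace K w → PlaceLiesOver f v w e → e = 1

/-- `F/K` is an algebraic function field of one variable: there is an element `t`,
transcendental over `K`, such that `F` is a finite extension of `K(t)`. -/
def IsAlgFunctionField (K F : Type*) [Field K] [Field F] [Algebra K F] : Prop :=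
  ∃ t : F, Transcendental K t ∧ FiniteDimensional ↥(IntermediateField.adjoin K {t}) F

/-- `K` is the full constant field of `F/K`: every element of `F` algebraic over `K`
lies in `K`. -/
def IsFullConstantField (K F : Type*) [Field K] [Field F] [Algebra K F] : Prop :=
  ∀ z : F, IsAlgebraic K z → z ∈ (algebraMap K F).range

/-- `t` is a separating element of `F/K`: `F` is finite and separable over `K(t)`. -/
def IsSeparatingElement (K : Type*) {F : Type*} [Field K] [Field F] [Algebra K F]
    (t : F) : Prop :=
  Transcendental K t ∧ FiniteDimensional ↥(IntermediateField.adjoin K {t}) F ∧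
    Algebra.IsSeparable ↥(IntermediateField.adjoin K {t}) F

/-- The ring of `S`-integers of `F/K`: the elements of `F` with no poles outside `S`,
i.e. the intersection of the valuation rings at all places outside `S`. -/
def SInt (K : Type*) {F : Type*} [Field K] [Field F] [Algebra K F]
    (S : Set (Valuation F Zm0)) : Subring F :=
  ⨅ (v : Valuation F Zm0) (_ : IsFnPlace K v) (_ : v ∉ S), v.valuationSubring.toSubring

set_option synthInstance.maxHeartbeats 1000000
set_option maxHeartbeats 2000000

section Aux

variable {K : Type*} [Field K]

/-- The image of any polynomial lies in the Laurent polynomial subalgebra `K[X, X⁻¹]`. -/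
lemma aux_poly_mem (p : Polynomial K) :
    algebraMap (Polynomial K) (RatFunc K) p ∈
      Algebra.adjoin K ({RatFunc.X, (RatFunc.X)⁻¹} : Set (RatFunc K)) := by
  induction p using Polynomial.induction_on' with
  | add p q hp hq => rw [map_add]; exact add_mem hp hq
  | monomial n c =>
      rw [← Polynomial.C_mul_X_pow_eq_monomial, map_mul, map_pow, RatFunc.algebraMap_C,
        RatFunc.algebraMap_X]
      exact mul_mem (Subalgebra.algebraMap_mem _ c)
        (pow_mem (Algebra.subset_adjoin (by simp)) n)

/-- Every Laurent polynomial is a polynomial divided by a power of `X`. -/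
lemma aux_rep {z : RatFunc K}
    (hz : z ∈ Algebra.adjoin K ({RatFunc.X, (RatFunc.X)⁻¹} : Set (RatFunc K))) :
    ∃ (p : Polynomial K) (n : ℕ),
      z * RatFunc.X ^ n = algebraMap (Polynomial K) (RatFunc K) p := by
  induction hz using Algebra.adjoin_induction with
  | mem x hx =>
      rcases hx with rfl | hx
      · exact ⟨Polynomial.X, 0, by simp [RatFunc.algebraMap_X]⟩
      · simp only [Set.mem_singleton_iff] at hx
        subst hx
        exact ⟨1, 1, by
          simp [pow_one, inv_mul_cancel₀ (RatFunc.X_ne_zero (K := K))]⟩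
  | algebraMap r =>
      exact ⟨Polynomial.C r, 0,
        by rw [pow_zero, mul_one, RatFunc.algebraMap_C, RatFunc.algebraMap_eq_C]⟩
  | add x y hx hy ihx ihy =>
      obtain ⟨p, n, hp⟩ := ihx
      obtain ⟨q, m, hq⟩ := ihy
      refine ⟨p * Polynomial.X ^ m + q * Polynomial.X ^ n, n + m, ?_⟩
      rw [map_add, map_mul, map_mul, map_pow, map_pow, RatFunc.algebraMap_X, ← hp, ← hq]
      ring
  | mul x y hx hy ihx ihy =>
      obtain ⟨p, n, hp⟩ := ihx
      obtain ⟨q, m, hq⟩ := ihy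
      refine ⟨p * q, n + m, ?_⟩
      rw [map_mul, ← hp, ← hq]
      ring

/-- The canonical ring map from `K[X]` into the Laurent polynomial subalgebra. -/
noncomputable def Bmap :
    Polynomial K →+* ↥(Algebra.adjoin K ({RatFunc.X, (RatFunc.X)⁻¹} : Set (RatFunc K))) :=
  (algebraMap (Polynomial K) (RatFunc K)).codRestrict
    (Algebra.adjoin K ({RatFunc.X, (RatFunc.X)⁻¹} : Set (RatFunc K))).toSubring
    (fun p => aux_poly_mem p)

/-- `K[X, X⁻¹]` is integrally closed in `K(X)`. -/
lemma aux_closed {z : RatFunc K} (p : Polynomial (RatFunc K)) (hmon : p.Monic)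
    (hco : (↑p.coeffs : Set (RatFunc K)) ⊆
      ↑(Algebra.adjoin K ({RatFunc.X, (RatFunc.X)⁻¹} : Set (RatFunc K))).toSubring)
    (hev : Polynomial.eval z p = 0) :
    z ∈ Algebra.adjoin K ({RatFunc.X, (RatFunc.X)⁻¹} : Set (RatFunc K)) := by
  have hX : (RatFunc.X : RatFunc K) ∈
      Algebra.adjoin K ({RatFunc.X, (RatFunc.X)⁻¹} : Set (RatFunc K)) :=
    Algebra.subset_adjoin (by simp)
  have hXi : (RatFunc.X : RatFunc K)⁻¹ ∈
      Algebra.adjoin K ({RatFunc.X, (RatFunc.X)⁻¹} : Set (RatFunc K)) :=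
    Algebra.subset_adjoin (by simp)
  have hXne : (RatFunc.X : RatFunc K) ≠ 0 := RatFunc.X_ne_zero
  have halg : algebraMap
      ↥(Algebra.adjoin K ({RatFunc.X, (RatFunc.X)⁻¹} : Set (RatFunc K))) (RatFunc K)
      = (Algebra.adjoin K ({RatFunc.X, (RatFunc.X)⁻¹} : Set (RatFunc K))).toSubring.subtype := by
    rw [Subalgebra.algebraMap_eq, Algebra.algebraMap_self, RingHom.id_comp,
      ← Subalgebra.toSubring_subtype]
  have hz : IsIntegral
      ↥(Algebra.adjoin K ({RatFunc.X, (RatFunc.X)⁻¹} : Set (RatFunc K))) z := by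
    refine ⟨p.toSubring _ hco, (Polynomial.monic_toSubring _ _ _).2 hmon, ?_⟩
    rw [Polynomial.eval₂_eq_eval_map, halg, Polynomial.map_toSubring]
    exact hev
  letI : Algebra (Polynomial K)
      ↥(Algebra.adjoin K ({RatFunc.X, (RatFunc.X)⁻¹} : Set (RatFunc K))) :=
    (Bmap (K := K)).toAlgebra
  haveI : IsScalarTower (Polynomial K)
      ↥(Algebra.adjoin K ({RatFunc.X, (RatFunc.X)⁻¹} : Set (RatFunc K))) (RatFunc K) :=
    IsScalarTower.of_algebraMap_eq fun p => rfl
  haveI : IsLocalization (Submonoid.powers (Polynomial.X : Polynomial K))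
      ↥(Algebra.adjoin K ({RatFunc.X, (RatFunc.X)⁻¹} : Set (RatFunc K))) := by
    constructor
    constructor
    · rintro ⟨y, n, rfl⟩
      have hXu : IsUnit (Bmap (K := K) Polynomial.X) := by
        refine isUnit_iff_exists_inv.mpr ⟨⟨(RatFunc.X)⁻¹, hXi⟩, ?_⟩
        ext
        show (RatFunc.X : RatFunc K) * (RatFunc.X)⁻¹ = 1
        exact mul_inv_cancel₀ hXne
      have hXun := hXu.pow n
      rw [← map_pow] at hXun
      exact hXun
    · intro z
      obtain ⟨p, n, hpn⟩ := aux_rep z.2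
      refine ⟨⟨p, ⟨Polynomial.X ^ n, Submonoid.pow_mem _ (Submonoid.mem_powers _) n⟩⟩, ?_⟩
      ext
      show (z : RatFunc K) * algebraMap (Polynomial K) (RatFunc K) (Polynomial.X ^ n)
        = algebraMap (Polynomial K) (RatFunc K) p
      rw [map_pow, RatFunc.algebraMap_X, hpn]
    · intro p q h
      have h' : algebraMap (Polynomial K) (RatFunc K) p
          = algebraMap (Polynomial K) (RatFunc K) q := congrArg Subtype.val h
      exact ⟨1, by simpa using (IsFractionRing.injective (Polynomial K) (RatFunc K)) h'⟩
  obtain ⟨⟨m, k, rfl⟩, hint⟩ := hz.exists_multiple_integral_of_isLocalization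
    (Submonoid.powers (Polynomial.X : Polynomial K)) z
  obtain ⟨q, hq⟩ := IsIntegrallyClosed.isIntegral_iff.mp hint
  have hq' : algebraMap (Polynomial K) (RatFunc K) q = RatFunc.X ^ k * z := by
    rw [hq, Submonoid.smul_def, Algebra.smul_def, map_pow, RatFunc.algebraMap_X]
  have hzq : z = algebraMap (Polynomial K) (RatFunc K) q * (RatFunc.X)⁻¹ ^ k := by
    rw [hq', inv_pow]
    field_simp
  rw [hzq]
  exact mul_mem (aux_poly_mem q) (pow_mem hXi k)

/-- Every Laurent polynomial is integral over `K[t]`, `t = X + a²/X`. -/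
lemma aux_integral (a : K) (ha : a ≠ 0) (t : RatFunc K)
    (ht : t = RatFunc.X + (algebraMap K (RatFunc K) a) ^ 2 / RatFunc.X)
    {z : RatFunc K} (hz : z ∈ Algebra.adjoin K ({RatFunc.X, (RatFunc.X)⁻¹} : Set (RatFunc K))) :
    IsIntegral ↥(Algebra.adjoin K ({t} : Set (RatFunc K))) z := by
  have hXne : (RatFunc.X : RatFunc K) ≠ 0 := RatFunc.X_ne_zero
  have haR : algebraMap K (RatFunc K) a ≠ 0 :=
    (map_ne_zero_iff _ (algebraMap K (RatFunc K)).injective).mpr ha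
  induction hz using Algebra.adjoin_induction with
  | mem x hx =>
      rcases hx with rfl | hx
      · refine ⟨Polynomial.X ^ 2
            - Polynomial.C (⟨t, Algebra.self_mem_adjoin_singleton K t⟩ :
                ↥(Algebra.adjoin K ({t} : Set (RatFunc K)))) * Polynomial.X
            + Polynomial.C (algebraMap K ↥(Algebra.adjoin K ({t} : Set (RatFunc K))) (a ^ 2)),
            ?_, ?_⟩
        · monicity!
        · simp only [Polynomial.eval₂_add, Polynomial.eval₂_sub, Polynomial.eval₂_mul,
            Polynomial.eval₂_pow, Polynomial.eval₂_X, Polynomial.eval₂_C]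
          show RatFunc.X ^ 2 - t * RatFunc.X + algebraMap K (RatFunc K) (a ^ 2) = 0
          rw [ht, map_pow]
          field_simp
          ring
      · simp only [Set.mem_singleton_iff] at hx
        subst hx
        refine ⟨Polynomial.X ^ 2
            - Polynomial.C ((a ^ 2)⁻¹ • (⟨t, Algebra.self_mem_adjoin_singleton K t⟩ :
                ↥(Algebra.adjoin K ({t} : Set (RatFunc K))))) * Polynomial.X
            + Polynomial.C (algebraMap K ↥(Algebra.adjoin K ({t} : Set (RatFunc K))) ((a ^ 2)⁻¹)),
            ?_, ?_⟩
        · monicity!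
        · simp only [Polynomial.eval₂_add, Polynomial.eval₂_sub, Polynomial.eval₂_mul,
            Polynomial.eval₂_pow, Polynomial.eval₂_X, Polynomial.eval₂_C]
          show (RatFunc.X : RatFunc K)⁻¹ ^ 2 - ((a ^ 2)⁻¹ • t) * (RatFunc.X)⁻¹
            + algebraMap K (RatFunc K) ((a ^ 2)⁻¹) = 0
          have hCa : RatFunc.C a ≠ 0 := by rwa [← RatFunc.algebraMap_eq_C]
          rw [Algebra.smul_def, map_inv₀, ht, map_pow]
          field_simp [hXne, hCa]
          ring
  | algebraMap r =>
      have : algebraMap K (RatFunc K) r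
          = algebraMap ↥(Algebra.adjoin K ({t} : Set (RatFunc K))) (RatFunc K)
            (algebraMap K ↥(Algebra.adjoin K ({t} : Set (RatFunc K))) r) := by
        rw [← IsScalarTower.algebraMap_apply]
      rw [this]
      exact isIntegral_algebraMap
  | add x y hx hy ihx ihy => exact ihx.add ihy
  | mul x y hx hy ihx ihy => exact ihx.mul ihy

end Aux

/-- the integral closure of `K[t]`, `t = x + a²/x`, in `K(x)` is the Laurent
polynomial ring `K[x, x⁻¹]`. -/
theorem stmt_0 {K : Type*} [Field K] (h2 : ringChar K ≠ 2) (a : K) (ha : a ≠ 0)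
    (t : RatFunc K)
    (ht : t = RatFunc.X + (algebraMap K (RatFunc K) a) ^ 2 / RatFunc.X) :
    (integralClosure ↥(Algebra.adjoin K ({t} : Set (RatFunc K))) (RatFunc K) : Set (RatFunc K)) =
      ↑(Algebra.adjoin K ({RatFunc.X, (RatFunc.X)⁻¹} : Set (RatFunc K))) := by
  have hX : (RatFunc.X : RatFunc K) ∈
      Algebra.adjoin K ({RatFunc.X, (RatFunc.X)⁻¹} : Set (RatFunc K)) :=
    Algebra.subset_adjoin (by simp)
  have hXi : (RatFunc.X : RatFunc K)⁻¹ ∈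
      Algebra.adjoin K ({RatFunc.X, (RatFunc.X)⁻¹} : Set (RatFunc K)) :=
    Algebra.subset_adjoin (by simp)
  have hAB : Algebra.adjoin K ({t} : Set (RatFunc K))
      ≤ Algebra.adjoin K ({RatFunc.X, (RatFunc.X)⁻¹} : Set (RatFunc K)) := by
    apply Algebra.adjoin_le
    intro y hy
    simp only [Set.mem_singleton_iff] at hy
    subst hy
    rw [ht, div_eq_mul_inv]
    exact add_mem hX (mul_mem (pow_mem (Subalgebra.algebraMap_mem _ a) 2) hXi)
  ext z
  constructor
  · intro hz
    have hzA : IsIntegral ↥(Algebra.adjoin K ({t} : Set (RatFunc K))) z := hz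
    have halgA : algebraMap ↥(Algebra.adjoin K ({t} : Set (RatFunc K))) (RatFunc K)
        = (Algebra.adjoin K ({t} : Set (RatFunc K))).toSubring.subtype := by
      rw [Subalgebra.algebraMap_eq, Algebra.algebraMap_self, RingHom.id_comp,
        ← Subalgebra.toSubring_subtype]
    obtain ⟨q, qmon, qev⟩ := hzA
    refine aux_closed
      (q.map (algebraMap ↥(Algebra.adjoin K ({t} : Set (RatFunc K))) (RatFunc K)))
      (qmon.map _) ?_ ?_
    · intro c hc
      obtain ⟨n, -, rfl⟩ := Polynomial.mem_coeffs_iff.mp hc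
      rw [Polynomial.coeff_map, halgA]
      exact hAB (q.coeff n).2
    · rw [Polynomial.eval_map]
      exact qev
  · intro hz
    exact aux_integral a ha t ht hz
end

section
/- Let F/K be an algebraic function field with perfect constant field K, F'/F a finite separable extension with F' = F(x), S a set of places of F/K, and x integral over the S-integer ring O_S. If O_P[x] is integrally closed for every place P ∉ S (where O_P is the valuation ring of P), then O_S[x] is integrally closed in F'. -/
open Multiplicative

open Polynomial in
/-- Elements of the subring generated by (the image of) a subring `R0` of `F` together
with `x` are exactly values of polynomials over `R0` at `x`. (Forward direction.) -/
private lemma aux_mem_closure_poly {F F' : Type*} [Field F] [Field F'] (f : F →+* F')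
    (R0 : Subring F) (x : F') {z : F'}
    (hz : z ∈ Subring.closure ((f '' R0) ∪ {x})) :
    ∃ p : Polynomial ↥R0, Polynomial.eval₂ (f.comp R0.subtype) x p = z := by
  refine Subring.closure_induction (fun y hy => ?_) ⟨0, by simp⟩ ⟨1, by simp⟩
    (fun a b _ _ ⟨p, hp⟩ ⟨q, hq⟩ => ⟨p + q, by simp [hp, hq]⟩)
    (fun a _ ⟨p, hp⟩ => ⟨-p, by simp [hp]⟩)
    (fun a b _ _ ⟨p, hp⟩ ⟨q, hq⟩ => ⟨p * q, by simp [hp, hq]⟩) hz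
  rcases hy with hy | hy
  · obtain ⟨a, ha, rfl⟩ := hy
    exact ⟨Polynomial.C ⟨a, ha⟩, by simp⟩
  · exact ⟨Polynomial.X, by simpa using hy.symm⟩

/-- Integrality ascends along an inclusion of subrings. -/
private lemma aux_isIntegral_of_le {F' : Type*} [CommRing F'] {A B : Subring F'} (h : A ≤ B)
    {z : F'} (hz : IsIntegral ↥A z) : IsIntegral ↥B z := by
  obtain ⟨p, hm, he⟩ := hz
  refine ⟨p.map (Subring.inclusion h), hm.map _, ?_⟩
  rw [Polynomial.eval₂_map]
  have : (algebraMap ↥B F').comp (Subring.inclusion h) = algebraMap ↥A F' :=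
    RingHom.ext fun t => rfl
  rw [this]; exact he

set_option maxHeartbeats 1000000 in
set_option synthInstance.maxHeartbeats 1000000 in
/-- Lemma 6(a): if `O_P[x]` is integrally closed in `F'` for every place
`P ∉ S`, then `O_S[x]` is integrally closed in `F'`. -/
theorem stmt_8 {K F F' : Type*} [Field K] [Field F] [Field F'] [Algebra K F] [Algebra F F']
    [PerfectField K] [FiniteDimensional F F'] [Algebra.IsSeparable F F']
    (hFK : IsAlgFunctionField K F)
    (S : Set (Valuation F Zm0)) (x : F')
    (hgen : IntermediateField.adjoin F ({x} : Set F') = ⊤)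
    (hxint : IsIntegral ↥((SInt K S).map (algebraMap F F' : F →+* F')) x)
    (hloc : ∀ v : Valuation F Zm0, IsFnPlace K v → v ∉ S →
      ∀ z : F',
        IsIntegral ↥(Subring.closure
          ((algebraMap F F' '' (v.valuationSubring : Set F)) ∪ {x})) z →
        z ∈ Subring.closure ((algebraMap F F' '' (v.valuationSubring : Set F)) ∪ {x})) :
    ∀ z : F',
      IsIntegral ↥(Subring.closure ((algebraMap F F' '' (SInt K S : Set F)) ∪ {x})) z →
      z ∈ Subring.closure ((algebraMap F F' '' (SInt K S : Set F)) ∪ {x}) := by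
  classical
  intro z hz
  set f : F →+* F' := (algebraMap F F' : F →+* F') with hf
  have hfi : Function.Injective f := f.injective
  have hxF : IsIntegral F x := IsIntegral.of_finite F x
  set μ : Polynomial F := minpoly F x with hμdef
  have hμmonic : μ.Monic := minpoly.monic hxF
  have hμaev : Polynomial.aeval x μ = 0 := minpoly.aeval F x
  -- z is a polynomial in x over F
  have hzmem : z ∈ Algebra.adjoin F ({x} : Set F') := by
    have h1 : z ∈ (IntermediateField.adjoin F ({x} : Set F')) := by rw [hgen]; trivial
    rw [← IntermediateField.adjoin_simple_toSubalgebra_of_isAlgebraic hxF.isAlgebraic]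
    exact h1
  rw [Algebra.adjoin_singleton_eq_range_aeval] at hzmem
  obtain ⟨p₀, hp₀'⟩ := hzmem
  have hp₀ : Polynomial.aeval x p₀ = z := hp₀'
  set r : Polynomial F := p₀ %ₘ μ with hrdef
  have hrdeg : r.degree < μ.degree := Polynomial.degree_modByMonic_lt p₀ hμmonic
  have hzr : Polynomial.aeval x r = z := by
    conv_rhs => rw [← hp₀, ← Polynomial.modByMonic_add_div p₀ μ]
    rw [map_add, map_mul, hμaev, zero_mul, add_zero]
  -- the key local fact at each place v outside S
  have hkey : ∀ v : Valuation F Zm0, IsFnPlace K v → v ∉ S →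
      ∀ i : ℕ, r.coeff i ∈ v.valuationSubring.toSubring := by
    intro v hv hvS
    set V : Subring F := v.valuationSubring.toSubring with hV
    have hle : SInt K S ≤ V := by
      intro a ha
      rw [SInt] at ha
      simp only [Subring.mem_iInf] at ha
      exact ha v hv hvS
    -- x is integral over the valuation ring
    letI : Algebra ↥v.valuationSubring F' :=
      (f.comp (algebraMap ↥v.valuationSubring F)).toAlgebra
    letI : IsScalarTower ↥v.valuationSubring F F' :=
      IsScalarTower.of_algebraMap_eq fun _ => rfl
    letI : IsScalarTower ↥v.valuationSubring F' F' :=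
      IsScalarTower.of_algebraMap_eq fun _ => rfl
    set T : Subring F' := (SInt K S).map f with hT
    set e : ↥(SInt K S) ≃+* ↥T := Subring.equivMapOfInjective _ f hfi with he'
    set φ : ↥T →+* ↥v.valuationSubring :=
      ((Subring.inclusion hle).comp e.symm.toRingHom : ↥T →+* ↥V) with hφ
    have hφcomp : (algebraMap ↥v.valuationSubring F').comp φ = algebraMap ↥T F' := by
      refine RingHom.ext fun t => ?_
      have h2 : f ↑(e.symm t) = ↑(e (e.symm t)) :=
        (Subring.coe_equivMapOfInjective_apply _ f hfi _).symm
      have h3 : e (e.symm t) = t := e.apply_symm_apply t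
      show f ↑(e.symm t) = (t : F')
      rw [h2, h3]
    have hxR : IsIntegral ↥v.valuationSubring x := by
      obtain ⟨p, hm, he⟩ := hxint
      exact ⟨p.map φ, hm.map _, by rw [Polynomial.eval₂_map, hφcomp]; exact he⟩
    -- coefficients of the minimal polynomial lie in the valuation ring
    have hμcoef : ∀ i : ℕ, μ.coeff i ∈ V := by
      intro i
      have hμeq : minpoly F ((algebraMap F' F') x) =
          (minpoly ↥v.valuationSubring x).map (algebraMap ↥v.valuationSubring F) :=
        minpoly.isIntegrallyClosed_eq_field_fractions F F' hxR
      rw [Algebra.algebraMap_self, RingHom.id_apply] at hμeq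
      rw [hμdef, hμeq, Polynomial.coeff_map]
      exact ((minpoly ↥v.valuationSubring x).coeff i).2
    -- z lies in O_v[x]
    have hAB : Subring.closure ((f '' (SInt K S : Set F)) ∪ {x}) ≤
        Subring.closure ((f '' (v.valuationSubring : Set F)) ∪ {x}) := by
      refine Subring.closure_mono (Set.union_subset_union_left _ ?_)
      exact Set.image_mono hle
    have hzB := hloc v hv hvS z (aux_isIntegral_of_le hAB hz)
    -- write z as a polynomial over O_v in x
    obtain ⟨p, hp⟩ := aux_mem_closure_poly f V x hzB
    -- reduce mod the minimal polynomial
    have hμcoeffs : ↑μ.coeffs ⊆ (V : Set F) := by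
      intro c hc
      simp only [Finset.coe_sort_coe, Finset.mem_coe, Polynomial.mem_coeffs_iff] at hc
      obtain ⟨n, _, rfl⟩ := hc
      exact hμcoef n
    set μ₀ : Polynomial ↥V := μ.toSubring V hμcoeffs with hμ₀
    have hμ₀map : μ₀.map V.subtype = μ := Polynomial.map_toSubring μ V hμcoeffs
    have hsubinj : Function.Injective (V.subtype) := Subtype.val_injective
    have hμ₀monic : μ₀.Monic := by
      have h4 : (μ₀.map V.subtype).Monic := by rw [hμ₀map]; exact hμmonic
      exact Polynomial.monic_of_injective hsubinj h4
    set r₁ : Polynomial ↥V := p %ₘ μ₀ with hr₁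
    set r₂ : Polynomial F := r₁.map V.subtype with hr₂
    have hevalμ₀ : Polynomial.eval₂ (f.comp V.subtype) x μ₀ = 0 := by
      rw [← Polynomial.eval₂_map, hμ₀map]
      exact hμaev
    have hr₂eval : Polynomial.aeval x r₂ = z := by
      have hdiv : r₁ + μ₀ * (p /ₘ μ₀) = p := Polynomial.modByMonic_add_div p μ₀
      have h5 : Polynomial.eval₂ (f.comp V.subtype) x p
          = Polynomial.eval₂ (f.comp V.subtype) x r₁ := by
        rw [← hdiv, Polynomial.eval₂_add, Polynomial.eval₂_mul, hevalμ₀]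
        ring
      rw [hr₂, Polynomial.aeval_def, Polynomial.eval₂_map, ← h5, hp]
    have hr₂deg : r₂.degree < μ.degree := by
      calc r₂.degree ≤ r₁.degree := Polynomial.degree_map_le
        _ < μ₀.degree := Polynomial.degree_modByMonic_lt p hμ₀monic
        _ = μ.degree := by rw [← hμ₀map, Polynomial.degree_map_eq_of_injective hsubinj]
    -- r₂ = r by uniqueness
    have hdiffzero : r₂ - r = 0 := by
      by_contra hne
      have haev : Polynomial.aeval x (r₂ - r) = 0 := by
        rw [map_sub, hr₂eval, hzr, sub_self]
      have h6 := minpoly.degree_le_of_ne_zero F x hne haev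
      have hlt : (r₂ - r).degree < μ.degree :=
        lt_of_le_of_lt (Polynomial.degree_sub_le _ _) (max_lt hr₂deg hrdeg)
      rw [← hμdef] at h6
      exact absurd h6 (not_le_of_gt hlt)
    have hreq : r₂ = r := sub_eq_zero.mp hdiffzero
    intro i
    rw [← hreq, hr₂, Polynomial.coeff_map]
    exact (r₁.coeff i).2
  -- coefficients of r lie in the S-integers
  have hrS : ∀ i : ℕ, r.coeff i ∈ SInt K S := by
    intro i
    rw [SInt]
    simp only [Subring.mem_iInf]
    exact fun v hv hvS => hkey v hv hvS i
  -- conclude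
  rw [← hzr, Polynomial.aeval_def, Polynomial.eval₂_eq_sum, Polynomial.sum_def]
  refine Subring.sum_mem _ fun i _ => Subring.mul_mem _ ?_ (Subring.pow_mem _ ?_ i)
  · exact Subring.subset_closure (Or.inl ⟨r.coeff i, hrS i, rfl⟩)
  · exact Subring.subset_closure (Or.inr rfl)
end

section
/- Let F/K be an algebraic function field with perfect constant field K, T a set of places of F/K, F' = F(x) a finite separable extension where x is algebraic over K and integral over O_T. Then O_T[x] is integrally closed in F'. -/
open Multiplicative

section Aux

open Polynomial

lemma aux_isIntegralElem_comp {R₁ R₂ B : Type*} [CommRing R₁] [CommRing R₂] [CommRing B]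
    (φ : R₂ →+* R₁) (i₁ : R₁ →+* B) (i₂ : R₂ →+* B) (h : i₁.comp φ = i₂) {x : B}
    (hx : i₂.IsIntegralElem x) : i₁.IsIntegralElem x := by
  obtain ⟨p, hm, he⟩ := hx
  refine ⟨p.map φ, hm.map _, ?_⟩
  rw [Polynomial.eval₂_map, h]
  exact he

lemma aux_alg_mem_integer {K F : Type*} [Field K] [Field F] [Algebra K F]
    {v : Valuation F Zm0} (hv : IsFnPlace K v) {c : F} (hc : IsAlgebraic K c) :
    c ∈ v.integer := by
  have hcI : IsIntegral K c := hc.isIntegral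
  set p := minpoly K c with hp
  set q := p.map (algebraMap K F) with hq
  have hsub : (↑q.coeffs : Set F) ⊆ (v.integer : Set F) := by
    intro a ha
    simp only [Finset.mem_coe, Polynomial.mem_coeffs_iff] at ha
    obtain ⟨n, _, rfl⟩ := ha
    rw [hq, Polynomial.coeff_map]
    by_cases h : p.coeff n = 0
    · simp only [h, map_zero]
      exact Subring.zero_mem _
    · exact le_of_eq (hv.2 _ h)
  have hint : IsIntegral ↥v.integer c := by
    refine ⟨q.toSubring v.integer hsub, ?_, ?_⟩
    · exact (Polynomial.monic_toSubring _ _ _).2 ((minpoly.monic hcI).map _)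
    · have hmap : (q.toSubring v.integer hsub).map v.integer.subtype = q :=
        Polynomial.map_toSubring _ _ _
      have : Polynomial.eval₂ (algebraMap ↥v.integer F) c (q.toSubring v.integer hsub)
          = q.eval c := by
        rw [Polynomial.eval₂_eq_eval_map]
        congr 1
      rw [this, hq, Polynomial.eval_map, ← Polynomial.aeval_def, minpoly.aeval]
  exact (Valuation.integer.integers v).mem_of_integral hint

lemma aux_SInt_integrallyClosed {K F : Type*} [Field K] [Field F] [Algebra K F]
    (T : Set (Valuation F Zm0)) {y : F} (hy : IsIntegral ↥(SInt K T) y) : y ∈ SInt K T := by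
  simp only [SInt, Subring.mem_iInf]
  intro v hv hvT
  have hle : SInt K T ≤ v.integer := by
    intro a ha
    simp only [SInt, Subring.mem_iInf] at ha
    exact ha v hv hvT
  have hint : IsIntegral ↥v.integer y :=
    aux_isIntegralElem_comp (Subring.inclusion hle) (algebraMap ↥v.integer F)
      (algebraMap ↥(SInt K T) F) (by ext a; rfl) hy
  exact (Valuation.integer.integers v).mem_of_integral hint

end Aux

section AuxDiscr
open Matrix Finset Polynomial Algebra

theorem aux_discr_mul_mem_adjoin {K L : Type*} [Field K] [Field L] [Algebra K L]
    [FiniteDimensional K L] [Algebra.IsSeparable K L]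
    {R : Type*} [CommRing R] [Algebra R K] [Algebra R L] [IsScalarTower R K L]
    (hcl : ∀ y : K, IsIntegral R y → y ∈ Set.range (algebraMap R K))
    {B : PowerBasis K L} (hint : IsIntegral R B.gen) {z : L}
    (hz : IsIntegral R z) : Algebra.discr K B.basis • z ∈ Algebra.adjoin R ({B.gen} : Set L) := by
  classical
  have hinv : IsUnit (traceMatrix K B.basis).det := by
    simpa [← discr_def] using discr_isUnit_of_basis _ B.basis
  have H :
    (traceMatrix K B.basis).det • (traceMatrix K B.basis) *ᵥ (B.basis.equivFun z) =
      (traceMatrix K B.basis).det • fun i => trace K L (z * B.basis i) := by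
    congr; exact traceMatrix_of_basis_mulVec _ _
  have cramer := mulVec_cramer (traceMatrix K B.basis) fun i => trace K L (z * B.basis i)
  suffices ∀ i, ((traceMatrix K B.basis).det • B.basis.equivFun z) i ∈ (⊥ : Subalgebra R K) by
    rw [← B.basis.sum_repr z, Finset.smul_sum]
    refine Subalgebra.sum_mem _ fun i _ => ?_
    replace this := this i
    rw [← discr_def, Pi.smul_apply, mem_bot] at this
    obtain ⟨r, hr⟩ := this
    rw [Module.Basis.equivFun_apply] at hr
    rw [← smul_assoc, ← hr, algebraMap_smul]
    refine Subalgebra.smul_mem _ ?_ _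
    rw [B.basis_eq_pow i]
    exact Subalgebra.pow_mem _ (subset_adjoin (Set.mem_singleton _)) _
  intro i
  rw [← H, ← mulVec_smul] at cramer
  replace cramer := congr_arg (mulVec (traceMatrix K B.basis)⁻¹) cramer
  rw [mulVec_mulVec, nonsing_inv_mul _ hinv, mulVec_mulVec, nonsing_inv_mul _ hinv, one_mulVec,
    one_mulVec] at cramer
  rw [← congr_fun cramer i, cramer_apply, det_apply]
  refine
    Subalgebra.sum_mem _ fun σ _ => Subalgebra.zsmul_mem _ (Subalgebra.prod_mem _ fun j _ => ?_) _
  by_cases hji : j = i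
  · simp only [updateCol_apply, hji, eq_self_iff_true, PowerBasis.coe_basis]
    exact mem_bot.2 (hcl _ <| isIntegral_trace (hz.mul <| hint.pow _))
  · simp only [updateCol_apply, hji, PowerBasis.coe_basis]
    exact mem_bot.2
      (hcl _ <| isIntegral_trace <| (hint.pow _).mul (hint.pow _))

end AuxDiscr

set_option synthInstance.maxHeartbeats 1000000 in
set_option maxHeartbeats 2000000 in
/-- Lemma 6(c): if `x` is algebraic over `K` (and integral over `O_T`), then
`O_T[x]` is integrally closed in `F'`. -/
theorem stmt_10 {K F F' : Type*} [Field K] [Field F] [Field F'] [Algebra K F] [Algebra F F']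
    [Algebra K F'] [IsScalarTower K F F']
    [PerfectField K] [FiniteDimensional F F'] [Algebra.IsSeparable F F']
    (hFK : IsAlgFunctionField K F)
    (T : Set (Valuation F Zm0)) (x : F')
    (hgen : IntermediateField.adjoin F ({x} : Set F') = ⊤)
    (hxalg : IsAlgebraic K x)
    (hxint : IsIntegral ↥((SInt K T).map (algebraMap F F' : F →+* F')) x) :
    ∀ z : F',
      IsIntegral ↥(Subring.closure ((algebraMap F F' '' (SInt K T : Set F)) ∪ {x})) z →
      z ∈ Subring.closure ((algebraMap F F' '' (SInt K T : Set F)) ∪ {x}) := by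
  classical
  intro z hz
  have finj : Function.Injective (algebraMap F F' : F →+* F') := (algebraMap F F').injective
  have hrange : Set.range (algebraMap ↥(SInt K T) F')
      = (algebraMap F F' : F →+* F') '' (SInt K T : Set F) := by
    ext w
    constructor
    · rintro ⟨a, rfl⟩; exact ⟨a, a.2, rfl⟩
    · rintro ⟨a, ha, rfl⟩; exact ⟨⟨a, ha⟩, rfl⟩
  have hS : Subring.closure ((algebraMap F F' '' (SInt K T : Set F)) ∪ {x})
      = (Algebra.adjoin ↥(SInt K T) ({x} : Set F')).toSubring := by
    rw [Algebra.adjoin_eq_ring_closure, hrange]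
  rw [hS, Subalgebra.mem_toSubring]
  -- x is integral over SInt K T
  have hxA : IsIntegral ↥(SInt K T) x := by
    refine aux_isIntegralElem_comp
      ((Subring.equivMapOfInjective _ (algebraMap F F' : F →+* F') finj).symm.toRingHom)
      (algebraMap ↥(SInt K T) F')
      (algebraMap ↥((SInt K T).map (algebraMap F F' : F →+* F')) F') ?_ hxint
    ext a
    show (algebraMap F F')
      (((Subring.equivMapOfInjective _ (algebraMap F F' : F →+* F') finj).symm a : F)) = ↑a
    rw [← Subring.coe_equivMapOfInjective_apply (hf := finj), RingEquiv.apply_symm_apply]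
  -- z is integral over SInt K T
  have hz' : IsIntegral ↥(Algebra.adjoin ↥(SInt K T) ({x} : Set F')) z := by
    rw [hS] at hz
    let φ : ↥((Algebra.adjoin ↥(SInt K T) ({x} : Set F')).toSubring) →+*
        ↥(Algebra.adjoin ↥(SInt K T) ({x} : Set F')) :=
      { toFun := fun a => ⟨a.1, a.2⟩
        map_one' := rfl
        map_mul' := fun _ _ => rfl
        map_zero' := rfl
        map_add' := fun _ _ => rfl }
    refine aux_isIntegralElem_comp φ _ _ ?_ hz
    ext a; rfl
  haveI : Algebra.IsIntegral ↥(SInt K T) ↥(Algebra.adjoin ↥(SInt K T) ({x} : Set F')) :=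
    Algebra.IsIntegral.adjoin (by rintro y hy; rw [Set.mem_singleton_iff] at hy; subst hy; exact hxA)
  have hzA : IsIntegral ↥(SInt K T) z := isIntegral_trans z hz'
  -- power basis
  have hxF : IsIntegral F x := Algebra.IsIntegral.isIntegral x
  let pb := IntermediateField.adjoin.powerBasis hxF
  let e : ↥(IntermediateField.adjoin F ({x} : Set F')) ≃ₐ[F] F' :=
    (IntermediateField.equivOfEq hgen).trans IntermediateField.topEquiv
  let B : PowerBasis F F' := pb.map e
  have hgenB : B.gen = x := by
    simp [B, e, pb, IntermediateField.adjoin.powerBasis]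
  have hcl : ∀ y : F, IsIntegral ↥(SInt K T) y → y ∈ Set.range (algebraMap ↥(SInt K T) F) :=
    fun y hy => ⟨⟨y, aux_SInt_integrallyClosed T hy⟩, rfl⟩
  have hmem : Algebra.discr F B.basis • z ∈ Algebra.adjoin ↥(SInt K T) ({x} : Set F') := by
    have := aux_discr_mul_mem_adjoin hcl (B := B) (hgenB ▸ hxA) hzA
    rwa [hgenB] at this
  -- the discriminant is algebraic over K, hence a unit of SInt K T
  set d := Algebra.discr F B.basis with hd_def
  have hd0 : d ≠ 0 := Algebra.discr_not_zero_of_basis F B.basis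
  set E := AlgebraicClosure F' with hE
  have card : Fintype.card (F' →ₐ[F] E) = B.dim := by
    rw [AlgHom.card F F' E, B.finrank]
  let e2 : Fin B.dim ≃ (F' →ₐ[F] E) := (Fintype.equivFinOfCardEq card).symm
  have hdisc := Algebra.discr_eq_det_embeddingsMatrixReindex_pow_two F E B.basis e2
  have hσ : ∀ (σ : F' →ₐ[F] E), IsIntegral K (σ x) := by
    intro σ
    refine ⟨minpoly K x, minpoly.monic hxalg.isIntegral, ?_⟩
    have h1 := Polynomial.aeval_algHom_apply (σ.restrictScalars K) x (minpoly K x)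
    rw [minpoly.aeval, map_zero] at h1
    rw [← Polynomial.aeval_def]
    exact h1
  have hInt : IsIntegral K (algebraMap F E d) := by
    rw [hd_def, hdisc]
    refine IsIntegral.pow (IsIntegral.det fun i j => ?_) 2
    simp only [Algebra.embeddingsMatrixReindex, Algebra.embeddingsMatrix,
      Matrix.reindex_apply, Matrix.submatrix_apply, Matrix.of_apply, Equiv.refl_symm,
      Equiv.refl_apply, PowerBasis.coe_basis]
    rw [map_pow]
    exact (hσ _).pow _
  have hdK : IsIntegral K d := by
    have hinj : Function.Injective (algebraMap F E) := (algebraMap F E).injective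
    exact (isIntegral_algebraMap_iff hinj).mp hInt
  have hdinv : IsAlgebraic K d⁻¹ := hdK.isAlgebraic.inv
  have hdinvA : d⁻¹ ∈ SInt K T := by
    simp only [SInt, Subring.mem_iInf]
    intro v hv _
    exact aux_alg_mem_integer hv hdinv
  have hzeq : z = (⟨d⁻¹, hdinvA⟩ : ↥(SInt K T)) • (d • z) := by
    rw [Algebra.smul_def, Algebra.smul_def, ← mul_assoc]
    show z = (algebraMap F F') d⁻¹ * ((algebraMap F F') d) * z
    rw [← map_mul, inv_mul_cancel₀ hd0, map_one, one_mul]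
  rw [hzeq]
  exact Subalgebra.smul_mem _ hmem _
end

section
/- Let F/K be an algebraic function field with perfect constant field K, S a set of places of F/K, and K'/K a finite extension. Then the integral closure of O_S in the constant field extension K'F is K'·O_S (the subring generated by K' and O_S). -/
open Multiplicative

section Aux

open Polynomial

/-- Transfer integrality along a ring hom compatible with the algebra maps. -/
theorem aux_isIntegral_of_comp {R S A : Type*} [CommRing R] [CommRing S] [CommRing A]
    [Algebra R A] [Algebra S A] (φ : R →+* S)
    (h : (algebraMap S A).comp φ = algebraMap R A) {x : A}
    (hx : IsIntegral R x) : IsIntegral S x := by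
  obtain ⟨p, hm, hev⟩ := hx
  refine ⟨p.map φ, hm.map φ, ?_⟩
  rw [Polynomial.eval₂_map, h]
  exact hev

/-- The constants map into the valuation subring of a place. -/
noncomputable def auxConstHom {K F : Type*} [Field K] [Field F] [Algebra K F]
    {v : Valuation F Zm0} (hv : IsFnPlace K v) : K →+* ↥v.valuationSubring :=
  (algebraMap K F).codRestrict _ (fun c => by
    rcases eq_or_ne c 0 with rfl | hc
    · rw [map_zero]
      exact zero_mem _
    · exact le_of_eq (hv.2 c hc))

theorem aux_integers {F : Type*} [Field F] (v : Valuation F Zm0) :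
    Valuation.Integers v ↥v.valuationSubring :=
  ⟨Subtype.coe_injective, fun r => r.2, fun r hr => ⟨⟨r, hr⟩, rfl⟩⟩

/-- An element integral over the constants lies in every valuation subring. -/
theorem aux_val_le_one {K F : Type*} [Field K] [Field F] [Algebra K F]
    {v : Valuation F Zm0} (hv : IsFnPlace K v) {x : F}
    (hx : IsIntegral K x) : v x ≤ 1 := by
  haveI := (aux_integers v).isIntegrallyClosed
  have hx' : IsIntegral ↥v.valuationSubring x :=
    aux_isIntegral_of_comp (A := F) (auxConstHom hv) (RingHom.ext fun c => rfl) hx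
  obtain ⟨y, hy⟩ := IsIntegrallyClosed.isIntegral_iff.mp hx'
  rw [← hy]
  exact y.2

/-- A nonzero element integral over the constants has valuation one at every place. -/
theorem aux_val_eq_one {K F : Type*} [Field K] [Field F] [Algebra K F]
    {v : Valuation F Zm0} (hv : IsFnPlace K v) {x : F} (hx0 : x ≠ 0)
    (hx : IsIntegral K x) : v x = 1 := by
  have h1 := aux_val_le_one hv hx
  have hx' : IsIntegral K x⁻¹ :=
    (isAlgebraic_iff_isIntegral).mp ((isAlgebraic_iff_isIntegral.mpr hx).inv)
  have h2 := aux_val_le_one hv hx'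
  have hm : v x * v x⁻¹ = 1 := by
    rw [← map_mul, mul_inv_cancel₀ hx0, map_one]
  refine le_antisymm h1 ?_
  calc (1 : Zm0) = v x * v x⁻¹ := hm.symm
    _ ≤ v x * 1 := mul_le_mul_right h2 _
    _ = v x := mul_one _

/-- Membership in the ring of `S`-integers. -/
theorem aux_mem_SInt {K F : Type*} [Field K] [Field F] [Algebra K F]
    {S : Set (Valuation F Zm0)} {x : F} :
    x ∈ SInt K S ↔ ∀ v : Valuation F Zm0, IsFnPlace K v → v ∉ S → v x ≤ 1 := by
  constructor
  · intro hx v hv hvS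
    exact Subring.mem_iInf.mp (Subring.mem_iInf.mp (Subring.mem_iInf.mp hx v) hv) hvS
  · intro h
    exact Subring.mem_iInf.mpr fun v => Subring.mem_iInf.mpr fun hv =>
      Subring.mem_iInf.mpr fun hvS => h v hv hvS

end Aux

set_option maxHeartbeats 2000000 in
/-- Corollary 7: for a finite extension `K'/K`, the integral closure of
`O_S` in the constant field extension `K'F` is the subring `K'·O_S` generated by `K'`
and `O_S`. -/
theorem stmt_11 {K K' F F' : Type*} [Field K] [Field K'] [Field F] [Field F']
    [Algebra K F] [Algebra K K'] [Algebra K F'] [Algebra K' F'] [Algebra F F']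
    [IsScalarTower K K' F'] [IsScalarTower K F F']
    [PerfectField K] (hFK : IsAlgFunctionField K F)
    [FiniteDimensional K K']
    -- `F'` is the compositum `K'F` of `K'` and `F`
    (hcomp : Subfield.closure
      (Set.range (algebraMap F F') ∪ Set.range (algebraMap K' F')) = ⊤)
    (S : Set (Valuation F Zm0)) :
    ∀ z : F',
      IsIntegral ↥((SInt K S).map (algebraMap F F' : F →+* F')) z ↔
      z ∈ Subring.closure
        ((algebraMap F F' '' (SInt K S : Set F)) ∪ Set.range (algebraMap K' F')) := by
  classical
  intro z
  set f : F →+* F' := (algebraMap F F' : F →+* F') with hfdef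
  have hfinj : Function.Injective f := f.injective
  -- separability of K'/K
  haveI : Algebra.IsAlgebraic K K' := Algebra.IsAlgebraic.of_finite K K'
  obtain ⟨α, hα⟩ := Field.exists_primitive_element K K'
  set α' : F' := algebraMap K' F' α with hα'def
  have hα'K : IsIntegral K α' :=
    (Algebra.IsIntegral.isIntegral α).map (IsScalarTower.toAlgHom K K' F')
  have hα'F : IsIntegral F α' := hα'K.tower_top
  -- the compositum is F(α')
  have h_top : IntermediateField.adjoin F {α'} = ⊤ := by
    refine eq_top_iff.mpr fun x _ => ?_
    have hx : x ∈ Subfield.closure (Set.range ⇑f ∪ Set.range ⇑(algebraMap K' F')) := by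
      rw [hcomp]; exact Subfield.mem_top x
    have hle : Subfield.closure (Set.range ⇑f ∪ Set.range ⇑(algebraMap K' F')) ≤
        (IntermediateField.adjoin F {α'}).toSubfield := ?_
    · exact hle hx
    refine Subfield.closure_le.mpr ?_
    rintro y (⟨r, rfl⟩ | ⟨c, rfl⟩)
    · exact (IntermediateField.adjoin F {α'}).algebraMap_mem r
    · have hc : c ∈ Subfield.comap (algebraMap K' F')
          (IntermediateField.adjoin F {α'}).toSubfield := by
        have hc' : c ∈ (⊤ : IntermediateField K K').toSubfield := trivial
        rw [← hα, IntermediateField.adjoin_toSubfield] at hc'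
        refine Subfield.closure_le.mpr ?_ hc'
        rintro w (⟨k, rfl⟩ | hw)
        · simp only [SetLike.mem_coe, Subfield.mem_comap]
          show algebraMap K' F' (algebraMap K K' k) ∈ (IntermediateField.adjoin F {α'}).toSubfield
          rw [← IsScalarTower.algebraMap_apply K K' F',
            IsScalarTower.algebraMap_apply K F F']
          exact (IntermediateField.adjoin F {α'}).algebraMap_mem _
        · rcases hw with rfl
          simp only [SetLike.mem_coe, Subfield.mem_comap]
          exact IntermediateField.mem_adjoin_simple_self F α'
      exact hc
  -- finite dimensionality and power basis
  haveI : FiniteDimensional F ↥(IntermediateField.adjoin F {α'}) :=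
    IntermediateField.adjoin.finiteDimensional hα'F
  let e : ↥(IntermediateField.adjoin F {α'}) ≃ₐ[F] F' :=
    (IntermediateField.equivOfEq h_top).trans IntermediateField.topEquiv
  haveI : FiniteDimensional F F' := Module.Finite.equiv e.toLinearEquiv
  let B : PowerBasis F F' := (IntermediateField.adjoin.powerBasis hα'F).map e
  have hBgen : B.gen = α' := rfl
  -- separability of F'/F
  have hsep' : IsSeparable F α' := by
    have h1 : (minpoly K α').Separable :=
      PerfectField.separable_of_irreducible (minpoly.irreducible hα'K)
    exact (h1.map (f := algebraMap K F)).of_dvd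
      (minpoly.dvd_map_of_isScalarTower K F α')
  haveI : Algebra.IsSeparable F ↥(IntermediateField.adjoin F {α'}) :=
    (IntermediateField.isSeparable_adjoin_simple_iff_isSeparable F F').mpr hsep'
  haveI : Algebra.IsSeparable F F' := Algebra.IsSeparable.of_algHom F _ e.symm.toAlgHom
  -- the discriminant
  set d : F := Algebra.discr F B.basis with hddef
  have hd0 : d ≠ 0 := Algebra.discr_not_zero_of_basis F B.basis
  have hdK : IsIntegral K d := by
    refine Algebra.discr_isIntegral F (fun i => ?_)
    rw [B.basis_eq_pow, hBgen]
    exact hα'K.pow _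
  have hdim : 0 < B.dim := by
    rw [← PowerBasis.natDegree_minpoly B, hBgen]
    exact minpoly.natDegree_pos hα'F
  constructor
  · -- integral ⟹ in K'·O_S
    intro hz
    set c : Fin B.dim → F := fun i => B.basis.repr z i with hcdef
    have key : ∀ (v : Valuation F Zm0), IsFnPlace K v → v ∉ S →
        ∀ i, c i ∈ v.valuationSubring := by
      intro v hv hvS i
      letI : Algebra ↥v.valuationSubring F' :=
        ((algebraMap F F').comp (algebraMap ↥v.valuationSubring F)).toAlgebra
      letI : IsScalarTower ↥v.valuationSubring F F' :=
        IsScalarTower.of_algebraMap_eq fun x => rfl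
      haveI := (aux_integers v).isIntegrallyClosed
      have hR0V : SInt K S ≤ v.valuationSubring.toSubring := by
        intro x hx
        exact aux_mem_SInt.mp hx v hv hvS
      -- z is integral over the valuation subring
      have hzV : IsIntegral ↥v.valuationSubring z := by
        set Φ := (SInt K S).equivMapOfInjective f hfinj with hΦ
        refine aux_isIntegral_of_comp
          ((((SInt K S).subtype).codRestrict v.valuationSubring
            (fun x => hR0V x.2)).comp Φ.symm.toRingHom) (RingHom.ext fun x => ?_) hz
        show f ((Φ.symm x : F)) = (x : F')
        conv_rhs => rw [← Φ.apply_symm_apply x]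
        exact (Subring.coe_equivMapOfInjective_apply _ f hfinj _).symm
      have hgenV : IsIntegral ↥v.valuationSubring B.gen := by
        rw [hBgen]
        refine aux_isIntegral_of_comp (auxConstHom hv) (RingHom.ext fun k => ?_) hα'K
        show algebraMap F F' (algebraMap K F k) = algebraMap K F' k
        rw [← IsScalarTower.algebraMap_apply K F F']
      have hmem := Algebra.discr_mul_isIntegral_mem_adjoin
        (R := ↥v.valuationSubring) (K := F) (L := F') hgenV hzV
      rw [Algebra.adjoin_singleton_eq_range_aeval] at hmem
      obtain ⟨q, hq⟩ := hmem
      -- reduce mod the minimal polynomial over the valuation ring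
      set mq : Polynomial ↥v.valuationSubring := minpoly ↥v.valuationSubring B.gen
        with hmqdef
      have hmqmonic : mq.Monic := minpoly.monic hgenV
      have hmqmap : mq.map (algebraMap ↥v.valuationSubring F) = minpoly F B.gen :=
        (minpoly.isIntegrallyClosed_eq_field_fractions' F hgenV).symm
      have hmqdeg : mq.natDegree = B.dim := by
        rw [← hmqmonic.natDegree_map (algebraMap ↥v.valuationSubring F), hmqmap,
          PowerBasis.natDegree_minpoly]
      have hmq1 : mq ≠ 1 := by
        intro h
        rw [h, Polynomial.natDegree_one] at hmqdeg
        omega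
      set q' : Polynomial ↥v.valuationSubring := q %ₘ mq with hq'def
      have haev : Polynomial.aeval B.gen q' = d • z := by
        have hsplit := Polynomial.modByMonic_add_div q mq
        have : Polynomial.aeval B.gen mq = 0 := by
          rw [← Polynomial.aeval_map_algebraMap F, hmqmap]
          exact minpoly.aeval F B.gen
        calc Polynomial.aeval B.gen q'
            = Polynomial.aeval B.gen (q %ₘ mq + mq * (q /ₘ mq)) := by
              rw [map_add, map_mul, this, zero_mul, add_zero]
          _ = Polynomial.aeval B.gen q := by rw [hsplit]
          _ = d • z := hq
      set r : Polynomial F := q'.map (algebraMap ↥v.valuationSubring F) with hrdef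
      have hrdeg : r.natDegree < B.dim := by
        calc r.natDegree ≤ q'.natDegree := Polynomial.natDegree_map_le
          _ < mq.natDegree := Polynomial.natDegree_modByMonic_lt q hmqmonic hmq1
          _ = B.dim := hmqdeg
      have haev2 : Polynomial.aeval B.gen r = d • z := by
        rw [hrdef, Polynomial.aeval_map_algebraMap F]
        exact haev
      have hsum : d • z = ∑ i : Fin B.dim, r.coeff i • B.basis i := by
        rw [← haev2, Polynomial.aeval_eq_sum_range' hrdeg B.gen,
          ← Fin.sum_univ_eq_sum_range (fun i => r.coeff i • B.gen ^ i) B.dim]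
        refine Finset.sum_congr rfl fun i _ => ?_
        rw [B.basis_eq_pow]
      have hrepr : ∀ i, d * c i = r.coeff i := by
        intro i
        have h1 : ⇑(B.basis.repr (d • z)) = fun i : Fin B.dim => r.coeff (i : ℕ) := by
          rw [hsum]
          exact B.basis.repr_sum_self _
        have h2 : B.basis.repr (d • z) = d • B.basis.repr z := map_smul _ _ _
        have := congrFun h1 i
        rw [h2] at this
        simpa [hcdef, smul_eq_mul] using this
      have hvd : v d = 1 := aux_val_eq_one hv hd0 hdK
      have hvr : v (r.coeff i) ≤ 1 := by
        rw [hrdef, Polynomial.coeff_map]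
        exact (q'.coeff i).2
      rw [Valuation.mem_valuationSubring_iff]
      have : v d * v (c i) ≤ 1 := by rw [← map_mul, hrepr i]; exact hvr
      rwa [hvd, one_mul] at this
    have hcS : ∀ i, c i ∈ SInt K S := by
      intro i
      exact aux_mem_SInt.mpr fun v hv hvS => key v hv hvS i
    have hzsum : z = ∑ i : Fin B.dim, c i • B.basis i := (B.basis.sum_repr z).symm
    rw [hzsum]
    refine Subring.sum_mem _ fun i _ => ?_
    have h1 : c i • B.basis i = f (c i) * α' ^ (i : ℕ) := by
      rw [Algebra.smul_def, B.basis_eq_pow, hBgen]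
    rw [h1]
    refine Subring.mul_mem _ ?_ (Subring.pow_mem _ ?_ _)
    · exact Subring.subset_closure (Or.inl ⟨c i, hcS i, rfl⟩)
    · exact Subring.subset_closure (Or.inr ⟨α, rfl⟩)
  · -- K'·O_S ⟹ integral
    intro hz
    have hKR : ∀ k : K, algebraMap K F' k ∈ (SInt K S).map f := by
      intro k
      refine ⟨algebraMap K F k, ?_, (IsScalarTower.algebraMap_apply K F F' k).symm⟩
      refine aux_mem_SInt.mpr fun v hv _ => ?_
      rcases eq_or_ne k 0 with rfl | hk
      · rw [map_zero, map_zero]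
        exact zero_le'
      · exact le_of_eq (hv.2 k hk)
    have : z ∈ (integralClosure ↥((SInt K S).map f) F').toSubring := by
      refine Subring.closure_le.mpr ?_ hz
      rintro y (⟨r, hr, rfl⟩ | ⟨c, rfl⟩)
      · show IsIntegral _ (f r)
        have : f r = algebraMap ↥((SInt K S).map f) F' ⟨f r, ⟨r, hr, rfl⟩⟩ := rfl
        rw [this]
        exact isIntegral_algebraMap
      · show IsIntegral _ (algebraMap K' F' c)
        have hcK : IsIntegral K (algebraMap K' F' c) :=
          (Algebra.IsIntegral.isIntegral c).map (IsScalarTower.toAlgHom K K' F')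
        refine aux_isIntegral_of_comp (A := F')
          ((algebraMap K F').codRestrict ((SInt K S).map f) hKR)
          (RingHom.ext fun k => rfl) hcK
    exact this
end

section
/- Let O ⊆ O' be an extension of Dedekind domains with O' = integral closure of O in a finite separable extension F'/F of fraction fields, F' = F(x) with x ∈ O'. If the different ideal of O'/O equals the principal ideal of O' generated by f'(x), where f is the minimal polynomial of x over F, then O' = O[x]. -/
/-- criterion used in the paper, cf. Zariski–Samuel V.11.29: if the
different ideal of `O'/O` is the principal ideal generated by `f'(x)`, where `f` is the
minimal polynomial of `x` over `F` and `O'` is the integral closure of the Dedekind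
domain `O` in `F' = F(x)`, then `O' = O[x]`. -/
theorem stmt_18 {A F F' : Type*} [CommRing A] [IsDedekindDomain A] [Field F] [Field F']
    [Algebra A F] [IsFractionRing A F] [Algebra F F'] [FiniteDimensional F F']
    [Algebra.IsSeparable F F'] [Algebra A F'] [IsScalarTower A F F']
    (x : F') (hx : x ∈ integralClosure A F')
    (hgen : IntermediateField.adjoin F ({x} : Set F') = ⊤)
    (hd : Polynomial.aeval x (Polynomial.derivative (minpoly F x)) ∈ integralClosure A F')
    (hD :
      letI : IsDedekindDomain ↥(integralClosure A F') :=
        integralClosure.isDedekindDomain A F F'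
      haveI : Module.IsTorsionFree A ↥(integralClosure A F') :=
        Module.isTorsionFree_iff_algebraMap_injective.mpr (by
          have h : Function.Injective (algebraMap A F') := by
            rw [IsScalarTower.algebraMap_eq A F F']
            exact (algebraMap F F').injective.comp (IsFractionRing.injective A F)
          intro a b hab
          exact h (congrArg Subtype.val hab))
      differentIdeal A ↥(integralClosure A F') =
        Ideal.span {(⟨Polynomial.aeval x (Polynomial.derivative (minpoly F x)), hd⟩ :
          ↥(integralClosure A F'))}) :
    integralClosure A F' = Algebra.adjoin A ({x} : Set F') := by
  classical
  letI B := integralClosure A F'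
  letI : IsDedekindDomain B := integralClosure.isDedekindDomain A F F'
  haveI : Module.IsTorsionFree A B :=
    Module.isTorsionFree_iff_algebraMap_injective.mpr (by
      have h : Function.Injective (algebraMap A F') := by
        rw [IsScalarTower.algebraMap_eq A F F']
        exact (algebraMap F F').injective.comp (IsFractionRing.injective A F)
      intro a b hab
      exact h (congrArg Subtype.val hab))
  haveI : IsIntegralClosure B A F' := integralClosure.isIntegralClosure A F'
  haveI : IsFractionRing B F' :=
    IsIntegralClosure.isFractionRing_of_finite_extension A F F' B
  set x' : B := ⟨x, hx⟩ with hx'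
  have hxI : IsIntegral A x' := IsIntegralClosure.isIntegral A F' x'
  have hmap : algebraMap B F' x' = x := rfl
  have hmin : minpoly F x = (minpoly A x').map (algebraMap A F) := by
    simpa [hmap] using minpoly.isIntegrallyClosed_eq_field_fractions F F' hxI
  have hdd : algebraMap B F' (Polynomial.aeval x' (Polynomial.derivative (minpoly A x')))
      = Polynomial.aeval x (Polynomial.derivative (minpoly F x)) := by
    rw [hmin, Polynomial.derivative_map, Polynomial.aeval_map_algebraMap, ← hmap,
      ← Polynomial.aeval_algebraMap_apply]
  have hdeq : (⟨Polynomial.aeval x (Polynomial.derivative (minpoly F x)), hd⟩ : B)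
      = Polynomial.aeval x' (Polynomial.derivative (minpoly A x')) :=
    Subtype.ext hdd.symm
  have hgen' : Algebra.adjoin F ({algebraMap B F' x'} : Set F') = ⊤ := by
    rw [hmap, ← IntermediateField.adjoin_simple_toSubalgebra_of_isAlgebraic
      (IsIntegral.of_finite F x).isAlgebraic]
    rw [show IntermediateField.adjoin F ({x} : Set F') = IntermediateField.adjoin F {x} from rfl]
    rw [hgen]
    rfl
  have hcond := conductor_mul_differentIdeal A F F' x' hgen'
  rw [hdeq] at hD
  have hne : Polynomial.aeval x' (Polynomial.derivative (minpoly A x')) ≠ 0 := by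
    intro h0
    have := hdd
    rw [h0, map_zero] at this
    exact (Algebra.IsSeparable.isSeparable F x).aeval_derivative_ne_zero
      (minpoly.aeval F x) this.symm
  have hDne : differentIdeal A B ≠ 0 := by
    rw [hD, Ne, Ideal.zero_eq_bot, Ideal.span_singleton_eq_bot]
    exact hne
  have hcond' : conductor A x' * differentIdeal A B = differentIdeal A B := by
    rw [hcond, hD]
  have htop : conductor A x' = ⊤ := by
    have := mul_right_cancel₀ hDne (by rw [hcond', one_mul] :
      conductor A x' * differentIdeal A B = 1 * differentIdeal A B)
    simpa [Ideal.one_eq_top] using this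
  have hadj : Algebra.adjoin A ({x'} : Set B) = ⊤ := by
    rw [eq_top_iff]
    intro b _
    have h1 : (1 : B) ∈ conductor A x' := htop ▸ Submodule.mem_top
    simpa using h1 b
  have := congrArg (Subalgebra.map (B.val)) hadj
  rw [AlgHom.map_adjoin] at this
  simpa [Algebra.map_top, Subalgebra.range_val, Set.image_singleton] using this.symm
end

section
/- Let F/K be an algebraic function field over a perfect field K, S a set of places, F' = F(x) a finite separable extension of degree n with x integral over O_S. If f ∈ ∩_{P∉S} O_P[x] (intersection inside F'), then f ∈ (∩_{P∉S} O_P)[x]; that is, ∩_{P∉S}(O_P[x]) = O_S[x] provided each O_P[x] is the integral closure of O_P in F'. -/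
open Multiplicative

open Polynomial

section Helpers

variable {F F' : Type*} [Field F] [Field F'] [Algebra F F']

lemma mem_closure_poly (R : Subring F) (x f : F') :
    f ∈ Subring.closure ((algebraMap F F' '' (R : Set F)) ∪ {x}) ↔
      ∃ p : F[X], (∀ i, p.coeff i ∈ R) ∧ aeval x p = f := by
  set φ : F →+* F' := (algebraMap F F' : F →+* F')
  set T : Subring F' := R.map φ with hT
  have hinj : Function.Injective φ := φ.injective
  have hrange : Set.range (algebraMap ↥T F') = algebraMap F F' '' (R : Set F) := by
    ext y
    constructor
    · rintro ⟨r, rfl⟩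
      obtain ⟨a, ha, haa⟩ := r.2
      exact ⟨a, ha, haa⟩
    · rintro ⟨a, ha, rfl⟩; exact ⟨⟨φ a, ⟨a, ha, rfl⟩⟩, rfl⟩
  rw [← hrange, ← Algebra.mem_adjoin_iff, Algebra.adjoin_singleton_eq_range_aeval]
  have halg : (algebraMap ↥T F') = T.subtype := rfl
  constructor
  · rintro ⟨q, rfl⟩
    let e := R.equivMapOfInjective φ hinj
    let ψ : ↥T →+* F := R.subtype.comp e.symm.toRingHom
    have hcomp : φ.comp ψ = T.subtype := by
      ext a
      show φ ((e.symm a : ↥R) : F) = (a : F')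
      rw [← Subring.coe_equivMapOfInjective_apply R φ hinj (e.symm a), e.apply_symm_apply]
    refine ⟨q.map ψ, fun i => ?_, ?_⟩
    · rw [Polynomial.coeff_map]; exact (e.symm (q.coeff i)).2
    · rw [Polynomial.aeval_def, Polynomial.eval₂_map, hcomp, ← halg, ← Polynomial.aeval_def]
      rfl
  · rintro ⟨p, hp, rfl⟩
    have hsub : ↑(p.map φ).coeffs ⊆ (T : Set F') := by
      intro a ha
      obtain ⟨i, -, rfl⟩ := Polynomial.mem_coeffs_iff.mp ha
      rw [Polynomial.coeff_map]
      exact ⟨p.coeff i, hp i, rfl⟩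
    refine ⟨(p.map φ).toSubring T hsub, ?_⟩
    show aeval x ((p.map φ).toSubring T hsub) = aeval x p
    rw [Polynomial.aeval_def, halg, ← Polynomial.eval_map, Polynomial.map_toSubring,
      Polynomial.eval_map, ← Polynomial.aeval_def]

lemma exists_monic_root_poly {R T : Subring F} (hRT : R ≤ T) {x : F'}
    (hx : IsIntegral ↥(R.map (algebraMap F F' : F →+* F')) x) :
    ∃ p : F[X], p.Monic ∧ (∀ i, p.coeff i ∈ T) ∧ aeval x p = 0 := by
  set φ : F →+* F' := (algebraMap F F' : F →+* F')
  have hinj : Function.Injective φ := φ.injective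
  obtain ⟨q, hqm, hq0⟩ := hx
  let e := R.equivMapOfInjective φ hinj
  let ψ : ↥(R.map φ) →+* F := R.subtype.comp e.symm.toRingHom
  have hcomp : φ.comp ψ = (R.map φ).subtype := by
    ext a
    show φ ((e.symm a : ↥R) : F) = (a : F')
    rw [← Subring.coe_equivMapOfInjective_apply R φ hinj (e.symm a), e.apply_symm_apply]
  refine ⟨q.map ψ, hqm.map ψ, fun i => ?_, ?_⟩
  · rw [Polynomial.coeff_map]
    exact hRT (e.symm (q.coeff i)).2
  · rw [Polynomial.aeval_def, Polynomial.eval₂_map, hcomp]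
    exact hq0

lemma minpoly_coeff_mem_valuationSubring (A : ValuationSubring F) {x : F'}
    (hx : ∃ p : F[X], p.Monic ∧ (∀ i, p.coeff i ∈ A.toSubring) ∧ aeval x p = 0) :
    ∀ i, (minpoly F x).coeff i ∈ A.toSubring := by
  haveI : IsFractionRing ↥A.toSubring F := inferInstanceAs (IsFractionRing ↥A F)
  haveI : IsIntegrallyClosed ↥A.toSubring := by
    have hv : Valuation.Integers A.valuation ↥A.toSubring :=
    { hom_inj := Subtype.coe_injective
      map_le_one := fun a => A.valuation_le_one a
      exists_of_le_one := fun r hr => ⟨⟨r, A.mem_of_valuation_le_one r hr⟩, rfl⟩ }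
    exact hv.isIntegrallyClosed
  obtain ⟨p, hpm, hpc, hp0⟩ := hx
  have hsub : ↑p.coeffs ⊆ (A.toSubring : Set F) := by
    intro a ha
    obtain ⟨i, -, rfl⟩ := Polynomial.mem_coeffs_iff.mp ha
    exact hpc i
  set q : Polynomial ↥A.toSubring := p.toSubring A.toSubring hsub with hq
  have hmap : q.map (algebraMap ↥A.toSubring F) = p := Polynomial.map_toSubring _ _ _
  have hqm : q.Monic := by
    rw [Function.Injective.monic_map_iff (f := (algebraMap ↥A.toSubring F))
      Subtype.coe_injective, hmap]
    exact hpm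
  have hxint : IsIntegral ↥A.toSubring x := by
    rw [← hmap, Polynomial.aeval_map_algebraMap] at hp0
    exact ⟨q, hqm, hp0⟩
  have heq := minpoly.isIntegrallyClosed_eq_field_fractions' F (S := F') hxint
  intro i
  rw [heq, Polynomial.coeff_map]
  exact ((minpoly (↥A.toSubring) x).coeff i).2

end Helpers

/-- if each `O_P[x]` (for `P ∉ S`) is the integral closure of `O_P` in
`F' = F(x)` of degree `n`, then `⋂_{P∉S} O_P[x] = O_S[x]` — an element of `F'` lies in
`O_S[x]` iff it lies in every `O_P[x]`, `P ∉ S`. -/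
theorem stmt_19 {K F F' : Type*} [Field K] [Field F] [Field F'] [Algebra K F]
    [Algebra F F'] [PerfectField K] [FiniteDimensional F F'] [Algebra.IsSeparable F F']
    (hFK : IsAlgFunctionField K F)
    (n : ℕ) (hn : Module.finrank F F' = n)
    (S : Set (Valuation F Zm0)) (x : F')
    (hgen : IntermediateField.adjoin F ({x} : Set F') = ⊤)
    (hxint : IsIntegral ↥((SInt K S).map (algebraMap F F' : F →+* F')) x)
    (hloc : ∀ v : Valuation F Zm0, IsFnPlace K v → v ∉ S →
      ∀ z : F',
        z ∈ Subring.closure ((algebraMap F F' '' (v.valuationSubring : Set F)) ∪ {x}) ↔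
        IsIntegral ↥((v.valuationSubring.toSubring).map (algebraMap F F' : F →+* F')) z) :
    ∀ f : F',
      f ∈ Subring.closure ((algebraMap F F' '' (SInt K S : Set F)) ∪ {x}) ↔
      ∀ v : Valuation F Zm0, IsFnPlace K v → v ∉ S →
        f ∈ Subring.closure ((algebraMap F F' '' (v.valuationSubring : Set F)) ∪ {x}) := by


  intro f
  constructor
  · intro hf v hv hvS
    refine Subring.closure_mono ?_ hf
    apply Set.union_subset_union_left
    apply Set.image_mono
    intro a ha
    exact (le_trans (iInf_le _ v) (le_trans (iInf_le _ hv) (iInf_le _ hvS)) :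
      SInt K S ≤ v.valuationSubring.toSubring) ha
  · intro hf
    have hxF : IsIntegral F x := IsIntegral.of_finite F x
    set μ := minpoly F x with hμdef
    have hμmonic : μ.Monic := minpoly.monic hxF
    have hμ0 : Polynomial.aeval x μ = 0 := minpoly.aeval F x
    have hfmem : f ∈ IntermediateField.adjoin F ({x} : Set F') := by
      rw [hgen]; exact IntermediateField.mem_top
    have hf' : f ∈ Algebra.adjoin F ({x} : Set F') := by
      rw [← IntermediateField.adjoin_simple_toSubalgebra_of_isAlgebraic hxF.isAlgebraic]
      exact hfmem
    rw [Algebra.adjoin_singleton_eq_range_aeval] at hf'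
    obtain ⟨p0, hp0⟩ := hf'
    set g := p0 %ₘ μ with hgdef
    have hrep : Polynomial.aeval x g = f := by
      have h2 : Polynomial.aeval x (p0 %ₘ μ + μ * (p0 /ₘ μ)) = f := by
        rw [Polynomial.modByMonic_add_div p0 μ]; exact hp0
      rw [map_add, map_mul, hμ0, zero_mul, add_zero] at h2
      exact h2
    have hgdeg : g.degree < μ.degree := Polynomial.degree_modByMonic_lt p0 hμmonic
    have hcoeff : ∀ i, g.coeff i ∈ SInt K S := by
      intro i
      rw [SInt, Subring.mem_iInf]
      intro v
      rw [Subring.mem_iInf]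
      intro hv
      rw [Subring.mem_iInf]
      intro hvS
      obtain ⟨p, hpR, hpx⟩ := (mem_closure_poly _ x f).mp (hf v hv hvS)
      have hle : SInt K S ≤ v.valuationSubring.toSubring :=
        le_trans (iInf_le _ v) (le_trans (iInf_le _ hv) (iInf_le _ hvS))
      have hμc : ∀ j, μ.coeff j ∈ v.valuationSubring.toSubring :=
        minpoly_coeff_mem_valuationSubring _ (exists_monic_root_poly hle hxint)
      set A := v.valuationSubring.toSubring with hA
      have hsubp : ↑p.coeffs ⊆ (A : Set F) := by
        intro a ha
        obtain ⟨j, -, rfl⟩ := Polynomial.mem_coeffs_iff.mp ha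
        exact hpR j
      have hsubμ : ↑μ.coeffs ⊆ (A : Set F) := by
        intro a ha
        obtain ⟨j, -, rfl⟩ := Polynomial.mem_coeffs_iff.mp ha
        exact hμc j
      set P := p.toSubring A hsubp with hP
      set M := μ.toSubring A hsubμ with hM
      have hPmap : P.map (algebraMap ↥A F) = p := Polynomial.map_toSubring _ _ _
      have hMmap : M.map (algebraMap ↥A F) = μ := Polynomial.map_toSubring _ _ _
      have hMmonic : M.Monic := by
        rw [Function.Injective.monic_map_iff (f := (algebraMap ↥A F))
          Subtype.coe_injective, hMmap]
        exact hμmonic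
      have hmod : (P %ₘ M).map (algebraMap ↥A F) = p %ₘ μ := by
        rw [Polynomial.map_modByMonic _ hMmonic, hPmap, hMmap]
      have hrep2 : Polynomial.aeval x (p %ₘ μ) = f := by
        have h2 : Polynomial.aeval x (p %ₘ μ + μ * (p /ₘ μ)) = f := by
          rw [Polynomial.modByMonic_add_div p μ]; exact hpx
        rw [map_add, map_mul, hμ0, zero_mul, add_zero] at h2
        exact h2
      have hdvd : μ ∣ g - (p %ₘ μ) :=
        minpoly.dvd F x (by rw [map_sub, hrep, hrep2, sub_self])
      have hdeg : (g - (p %ₘ μ)).degree < μ.degree :=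
        lt_of_le_of_lt (Polynomial.degree_sub_le _ _)
          (max_lt hgdeg (Polynomial.degree_modByMonic_lt p hμmonic))
      have hzero : g - (p %ₘ μ) = 0 := Polynomial.eq_zero_of_dvd_of_degree_lt hdvd hdeg
      have hge : g = p %ₘ μ := sub_eq_zero.mp hzero
      rw [hge, ← hmod, Polynomial.coeff_map]
      exact ((P %ₘ M).coeff i).2
    exact (mem_closure_poly _ x f).mpr ⟨g, hcoeff, hrep⟩
end
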